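/- arXiv:2312.16239 — 4 statements merged into one kernel-verified Lean document; each statement's English description precedes it below -/
import Mathlib

section
/- There exists a renaming set X, an element x ∈ X, and a renaming ρ such that ρ·supp(x) is not a subset of supp(ρ·x). -/
abbrev Atom := ℕ

def RenMonoid : Submonoid (Function.End Atom) where
  carrier := {ρ | {a | ρ a ≠ a}.Finite}
  one_mem' := Set.Finite.subset Set.finite_empty (fun _ ha => (ha rfl).elim)
  mul_mem' := by
    intro ρ ρ' hρ hρ'
    refine Set.Finite.subset (Set.Finite.union hρ hρ') fun a ha => ?_
    by_contra h
    simp only [Set.mem_union, Set.mem_setOf_eq, not_or, not_not] at h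
    exact ha (show ρ (ρ' a) = a by rw [h.2, h.1])

abbrev Ren : Type := RenMonoid

def rdom (ρ : Ren) : Set Atom := {a | ρ.1 a ≠ a}
def rimg (ρ : Ren) : Set Atom := ρ.1 '' rdom ρ
def rnontriv (ρ : Ren) : Set Atom := rdom ρ ∪ rimg ρ

def RSupports {X : Type*} [MulAction Ren X] (A : Set Atom) (x : X) : Prop :=
  ∀ ρ ρ' : Ren, (∀ a ∈ A, ρ.1 a = ρ'.1 a) → ρ • x = ρ' • x

def RIsLeastSupport {X : Type*} [MulAction Ren X] (S : Set Atom) (x : X) : Prop :=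
  RSupports S x ∧ ∀ A, RSupports A x → S ⊆ A

def IsPermissionSet (S : Set Atom) : Prop :=
  ∃ A B : Finset Atom, (↑A : Set Atom) ⊆ {n | n % 2 = 1} ∧ (↑B : Set Atom) ⊆ {n | n % 2 = 0} ∧
    S = ({n : Atom | n % 2 = 0} ∪ ↑A) \ ↑B

def atomRen (a b : Atom) : Ren :=
  ⟨fun c => if c = a then b else c, by
    show {c | (if c = a then b else c) ≠ c}.Finite
    apply Set.Finite.subset (Set.finite_singleton a)
    intro c hc
    by_contra hn
    simp only [Set.mem_singleton_iff] at hn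
    exact hc (by simp [if_neg hn])⟩

def FunSupportedBy {X Y : Type*} [MulAction Ren X] [MulAction Ren Y]
    (S : Set Atom) (f : X → Y) : Prop :=
  ∀ (ρ : Ren) (x : X), rdom ρ ∩ S = ∅ → ρ • f x = f (ρ • x)

def FreshPair (ρ₁ ρ₂ : Ren) (A S : Set Atom) : Prop :=
  rdom ρ₁ = A ∧ rdom ρ₂ = rimg ρ₁ ∧ (∀ a ∈ A, ρ₂.1 (ρ₁.1 a) = a) ∧
    rdom ρ₂ ∩ (S ∪ A) = ∅

instance : SMul Ren Atom := ⟨fun ρ a => ρ.1 a⟩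
instance : MulAction Ren Atom where
  one_smul _ := rfl
  mul_smul _ _ _ := rfl

def RSupportsOn {X : Type*} (act : Ren → X → X) (A : Set Atom) (x : X) : Prop :=
  ∀ ρ ρ' : Ren, (∀ a ∈ A, ρ.1 a = ρ'.1 a) → act ρ x = act ρ' x

@[simp] lemma ren_one_apply (a : Atom) : (1 : Ren).1 a = a := rfl

def myAct (ρ : Ren) : Option (Atom × Atom) → Option (Atom × Atom)
  | none => none
  | some (a, b) => if ρ.1 a = ρ.1 b ∧ a ≠ b then none else some (ρ.1 a, ρ.1 b)

theorem stmt3 : ∃ (X : Type) (act : Ren → X → X),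
    (∀ x, act 1 x = x) ∧ (∀ ρ ρ' x, act (ρ * ρ') x = act ρ (act ρ' x)) ∧
    ∃ (x : X) (ρ : Ren) (S S' : Set Atom),
      RSupportsOn act S x ∧ (∀ A, RSupportsOn act A x → S ⊆ A) ∧
      RSupportsOn act S' (act ρ x) ∧ (∀ A, RSupportsOn act A (act ρ x) → S' ⊆ A) ∧
      ¬ (ρ.1 '' S ⊆ S') := by
  refine ⟨Option (Atom × Atom), myAct, ?_, ?_,
    some (0, 1), atomRen 0 1, {0, 1}, ∅, ?_, ?_, ?_, ?_, ?_⟩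
  · rintro (_ | ⟨a, b⟩) <;> simp [myAct]
  · rintro ρ ρ' (_ | ⟨a, b⟩)
    · rfl
    · by_cases h : ρ'.1 a = ρ'.1 b ∧ a ≠ b
      · have : (ρ * ρ').1 a = (ρ * ρ').1 b := by
          show ρ.1 (ρ'.1 a) = ρ.1 (ρ'.1 b); rw [h.1]
        simp [myAct, h, this, h.2]
      · push_neg at h
        by_cases hab : a = b
        · subst hab
          simp [myAct, show (ρ * ρ').1 a = ρ.1 (ρ'.1 a) from rfl]
        · have h' : ρ'.1 a ≠ ρ'.1 b := fun heq => hab (h heq)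
          by_cases h2 : ρ.1 (ρ'.1 a) = ρ.1 (ρ'.1 b)
          · simp [myAct, show (ρ * ρ').1 a = ρ.1 (ρ'.1 a) from rfl,
              show (ρ * ρ').1 b = ρ.1 (ρ'.1 b) from rfl, h2, hab, h']
          · simp [myAct, show (ρ * ρ').1 a = ρ.1 (ρ'.1 a) from rfl,
              show (ρ * ρ').1 b = ρ.1 (ρ'.1 b) from rfl, h2, hab, h']
  · intro ρ ρ' hagree
    have h0 : ρ.1 0 = ρ'.1 0 := hagree 0 (by simp)
    have h1 : ρ.1 1 = ρ'.1 1 := hagree 1 (by simp)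
    simp [myAct, h0, h1]
  · intro A hA c hc
    by_contra hcA
    rcases hc with hc | hc <;> (try simp only [Set.mem_singleton_iff] at hc) <;> subst hc
    · have := hA 1 (atomRen 0 2) (by
        intro a ha
        have hne : a ≠ 0 := fun h => hcA (h ▸ ha)
        simp [atomRen, hne])
      simp [myAct, atomRen] at this
    · have := hA 1 (atomRen 1 2) (by
        intro a ha
        have hne : a ≠ 1 := fun h => hcA (h ▸ ha)
        simp [atomRen, hne])
      simp [myAct, atomRen] at this
  · intro ρ ρ' _
    simp [myAct, atomRen]
  · intro A _
    exact Set.empty_subset A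
  · intro h
    have : (1 : Atom) ∈ (∅ : Set Atom) := h ⟨0, by simp, by simp [atomRen]⟩
    exact this
end

section
/- If f : X → Y between supported renaming sets is supported in the sense that there is a permission set S_f with ρ·f(x) = f(ρ·x) whenever dom(ρ) ∩ S_f = ∅, then f, as an element of the function renaming set with the action (ρ·f)(x) = (ρ₂∘ρ)·f(ρ₁·x) for a freshening pair (ρ₁,ρ₂), is supported by S_f in the sense of the renaming-set support definition (any two renamings agreeing on S_f act equally on f). -/
/-! ### Auxiliary lemmas -/

lemma ren_mul_apply (ρ σ : Ren) (a : Atom) : (ρ * σ).1 a = ρ.1 (σ.1 a) := rfl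

lemma rdom_finite (ρ : Ren) : (rdom ρ).Finite := ρ.2
lemma rimg_finite (ρ : Ren) : (rimg ρ).Finite := (rdom_finite ρ).image _
lemma rnontriv_finite (ρ : Ren) : (rnontriv ρ).Finite :=
  (rdom_finite ρ).union (rimg_finite ρ)

lemma not_rdom (ρ : Ren) {a : Atom} (h : a ∉ rdom ρ) : ρ.1 a = a := not_not.mp h

lemma supp_smul_subset {X : Type*} [MulAction Ren X] (suppX : X → Set Atom)
    (hX : ∀ x, RIsLeastSupport (suppX x) x) (σ : Ren) (x : X) :
    suppX (σ • x) ⊆ σ.1 '' suppX x := by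
  apply (hX (σ • x)).2
  intro τ τ' hag
  rw [← mul_smul, ← mul_smul]
  exact (hX x).1 _ _ (fun a ha => hag _ (Set.mem_image_of_mem _ ha))

lemma supp_apply_subset {X Y : Type*} [MulAction Ren X] [MulAction Ren Y]
    (suppX : X → Set Atom) (suppY : Y → Set Atom)
    (hX : ∀ x, RIsLeastSupport (suppX x) x) (hY : ∀ y, RIsLeastSupport (suppY y) y)
    (f : X → Y) (Sf : Set Atom) (hf : FunSupportedBy Sf f) (z : X) :
    suppY (f z) ⊆ Sf ∪ suppX z := by
  intro a ha
  by_contra han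
  simp only [Set.mem_union, not_or] at han
  obtain ⟨haSf, haz⟩ := han
  -- for any c, (a ↦ c) • f z = f z
  have key : ∀ c : Atom, atomRen a c • f z = f z := by
    intro c
    have hd : rdom (atomRen a c) ∩ Sf = ∅ := by
      apply Set.eq_empty_iff_forall_notMem.mpr
      rintro d ⟨hd1, hd2⟩
      have : d = a := by
        by_contra hda
        exact hd1 (by simp [atomRen, if_neg hda])
      exact haSf (this ▸ hd2)
    rw [hf _ _ hd]
    congr 1
    have : atomRen a c • z = (1 : Ren) • z := by
      apply (hX z).1
      intro b hb
      have hba : b ≠ a := fun hba => haz (hba ▸ hb)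
      show (if b = a then c else b) = (1 : Ren).1 b
      rw [if_neg hba]; rfl
    rw [this, one_smul]
  -- then suppY (f z) \ {a} supports f z
  have hsupp : RSupports (suppY (f z) \ {a}) (f z) := by
    intro σ σ' hag
    -- choose c with σ c = σ' c, handling both cases
    obtain ⟨c, hc⟩ : ∃ c, σ.1 c = σ'.1 c ∧ (∀ k ∈ suppY (f z), k ≠ a → σ.1 k = σ'.1 k) := by
      by_cases hex : ∃ c ∈ suppY (f z), c ≠ a
      · obtain ⟨c, hc1, hc2⟩ := hex
        exact ⟨c, hag c ⟨hc1, hc2⟩, fun k hk hka => hag k ⟨hk, hka⟩⟩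
      · have hfin : ({a} ∪ (rdom σ ∪ rdom σ')).Finite :=
          (Set.finite_singleton a).union ((rdom_finite σ).union (rdom_finite σ'))
        obtain ⟨c, hc⟩ := hfin.infinite_compl.nonempty
        simp only [Set.mem_compl_iff, Set.mem_union, Set.mem_singleton_iff, not_or] at hc
        refine ⟨c, ?_, fun k hk hka => hag k ⟨hk, hka⟩⟩
        rw [not_rdom σ hc.2.1, not_rdom σ' hc.2.2]
    calc σ • f z = σ • (atomRen a c • f z) := by rw [key c]
      _ = (σ * atomRen a c) • f z := (mul_smul _ _ _).symm
      _ = (σ' * atomRen a c) • f z := by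
          apply (hY (f z)).1
          intro k hk
          rw [ren_mul_apply, ren_mul_apply]
          by_cases hka : k = a
          · subst hka
            show σ.1 (if k = k then c else k) = σ'.1 (if k = k then c else k)
            rw [if_pos rfl]; exact hc.1
          · show σ.1 (if k = a then c else k) = σ'.1 (if k = a then c else k)
            rw [if_neg hka]; exact hc.2 k hk hka
      _ = σ' • (atomRen a c • f z) := mul_smul _ _ _
      _ = σ' • f z := by rw [key c]
  have := (hY (f z)).2 _ hsupp ha
  exact this.2 rfl

theorem stmt6 {X Y : Type*} [MulAction Ren X] [MulAction Ren Y]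
    (suppX : X → Set Atom) (suppY : Y → Set Atom)
    (hX : ∀ x, RIsLeastSupport (suppX x) x) (hY : ∀ y, RIsLeastSupport (suppY y) y)
    (f : X → Y) (Sf : Set Atom) (hSf : IsPermissionSet Sf) (hf : FunSupportedBy Sf f)
    (ρ ρ' : Ren) (hagree : ∀ a ∈ Sf, ρ.1 a = ρ'.1 a) (x : X)
    (ρ₁ ρ₂ : Ren) (h : FreshPair ρ₁ ρ₂ (rnontriv ρ) (suppX x ∪ Sf))
    (ρ₁' ρ₂' : Ren) (h' : FreshPair ρ₁' ρ₂' (rnontriv ρ') (suppX x ∪ Sf)) :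
    (ρ₂ * ρ) • f (ρ₁ • x) = (ρ₂' * ρ') • f (ρ₁' • x) := by
  classical
  obtain ⟨h1, h2, h3, h4⟩ := h
  obtain ⟨h1', h2', h3', h4'⟩ := h'
  -- freshness facts
  have hB : ∀ b ∈ rimg ρ₁, b ∉ suppX x ∧ b ∉ Sf ∧ b ∉ rnontriv ρ := by
    intro b hb
    have hb2 : b ∈ rdom ρ₂ := by rw [h2]; exact hb
    have hn : b ∉ (suppX x ∪ Sf) ∪ rnontriv ρ := by
      intro hmem
      exact Set.eq_empty_iff_forall_notMem.mp h4 b ⟨hb2, hmem⟩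
    simp only [Set.mem_union, not_or] at hn
    exact ⟨hn.1.1, hn.1.2, hn.2⟩
  have hB' : ∀ b ∈ rimg ρ₁', b ∉ suppX x ∧ b ∉ Sf ∧ b ∉ rnontriv ρ' := by
    intro b hb
    have hb2 : b ∈ rdom ρ₂' := by rw [h2']; exact hb
    have hn : b ∉ (suppX x ∪ Sf) ∪ rnontriv ρ' := by
      intro hmem
      exact Set.eq_empty_iff_forall_notMem.mp h4' b ⟨hb2, hmem⟩
    simp only [Set.mem_union, not_or] at hn
    exact ⟨hn.1.1, hn.1.2, hn.2⟩
  -- identity facts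
  have hρ1_id : ∀ c, c ∉ rnontriv ρ → ρ₁.1 c = c := fun c hc =>
    not_rdom ρ₁ (by rw [h1]; exact hc)
  have hρ1'_id : ∀ c, c ∉ rnontriv ρ' → ρ₁'.1 c = c := fun c hc =>
    not_rdom ρ₁' (by rw [h1']; exact hc)
  have hρ2_id : ∀ c, c ∉ rimg ρ₁ → ρ₂.1 c = c := fun c hc =>
    not_rdom ρ₂ (by rw [h2]; exact hc)
  have hρ2'_id : ∀ c, c ∉ rimg ρ₁' → ρ₂'.1 c = c := fun c hc =>
    not_rdom ρ₂' (by rw [h2']; exact hc)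
  have hρ_id : ∀ c, c ∉ rnontriv ρ → ρ.1 c = c := fun c hc =>
    not_rdom ρ (fun hd => hc (Or.inl hd))
  have hρ'_id : ∀ c, c ∉ rnontriv ρ' → ρ'.1 c = c := fun c hc =>
    not_rdom ρ' (fun hd => hc (Or.inl hd))
  have hmemB : ∀ a ∈ rnontriv ρ, ρ₁.1 a ∈ rimg ρ₁ := fun a ha =>
    ⟨a, by rw [h1]; exact ha, rfl⟩
  have hmemB' : ∀ a ∈ rnontriv ρ', ρ₁'.1 a ∈ rimg ρ₁' := fun a ha =>
    ⟨a, by rw [h1']; exact ha, rfl⟩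
  have hinj' : ∀ a ∈ rnontriv ρ', ∀ b ∈ rnontriv ρ', ρ₁'.1 a = ρ₁'.1 b → a = b := by
    intro a ha b hb heq
    rw [← h3' a ha, ← h3' b hb, heq]
  have hρA : ∀ c ∈ rdom ρ, ρ.1 c ∈ rnontriv ρ := fun c hc => Or.inr ⟨c, hc, rfl⟩
  have hρ'A : ∀ c ∈ rdom ρ', ρ'.1 c ∈ rnontriv ρ' := fun c hc => Or.inr ⟨c, hc, rfl⟩
  -- Sf interplay: ρ and ρ' agree on Sf
  have hSfdom : ∀ c ∈ Sf, c ∈ rdom ρ → c ∈ rdom ρ' := by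
    intro c hc hcd
    show ρ'.1 c ≠ c
    rw [← hagree c hc]; exact hcd
  have hSfdom' : ∀ c ∈ Sf, c ∈ rdom ρ' → c ∈ rdom ρ := by
    intro c hc hcd
    show ρ.1 c ≠ c
    rw [hagree c hc]; exact hcd
  -- the transfer set W
  set W : Set Atom := (suppX x ∩ Sf ∩ rnontriv ρ') \ rnontriv ρ with hW
  have hWA' : W ⊆ rnontriv ρ' := fun c hc => hc.1.2
  have hWdom' : W ⊆ rdom ρ₁' := fun c hc => by rw [h1']; exact hc.1.2
  -- transfer renaming θ : moves fresh B-copies to fresh B'-copies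
  set θf : Atom → Atom := fun c =>
    if c ∈ rimg ρ₁ then ρ₁'.1 (ρ₂.1 c)
    else if c ∈ rnontriv ρ' ∧ c ∉ rnontriv ρ ∧ c ∉ Sf then ρ₁'.1 c else c with hθf
  have hθfin : {c | θf c ≠ c}.Finite := by
    apply Set.Finite.subset ((rimg_finite ρ₁).union (rnontriv_finite ρ'))
    intro c hc
    simp only [Set.mem_setOf_eq, hθf] at hc
    by_cases h5 : c ∈ rimg ρ₁
    · exact Or.inl h5
    · rw [if_neg h5] at hc
      by_cases h6 : c ∈ rnontriv ρ' ∧ c ∉ rnontriv ρ ∧ c ∉ Sf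
      · exact Or.inr h6.1
      · rw [if_neg h6] at hc; exact absurd rfl hc
  set θ : Ren := ⟨θf, hθfin⟩ with hθ
  -- χ : sends the W-copies in B' back to W
  set χf : Atom → Atom := fun c => if c ∈ ρ₁'.1 '' W then ρ₂'.1 c else c with hχf
  have hχfin : {c | χf c ≠ c}.Finite := by
    apply Set.Finite.subset (rimg_finite ρ₁')
    intro c hc
    simp only [Set.mem_setOf_eq, hχf] at hc
    by_cases h5 : c ∈ ρ₁'.1 '' W
    · obtain ⟨w, hw, rfl⟩ := h5
      exact ⟨w, hWdom' hw, rfl⟩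
    · rw [if_neg h5] at hc; exact absurd rfl hc
  set χ : Ren := ⟨χf, hχfin⟩ with hχ
  -- ξ : the final correction
  set ξf : Atom → Atom := fun c =>
    if c ∈ ρ₁'.1 '' ((suppX x ∩ rnontriv ρ') \ W) then ρ₂'.1 c
    else if c ∈ Sf ∧ c ∈ rdom ρ then ρ.1 c else c with hξf
  have hξfin : {c | ξf c ≠ c}.Finite := by
    apply Set.Finite.subset ((rimg_finite ρ₁').union (rdom_finite ρ))
    intro c hc
    simp only [Set.mem_setOf_eq, hξf] at hc
    by_cases h5 : c ∈ ρ₁'.1 '' ((suppX x ∩ rnontriv ρ') \ W)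
    · obtain ⟨w, hw, rfl⟩ := h5
      exact Or.inl ⟨w, by rw [h1']; exact hw.1.2, rfl⟩
    · rw [if_neg h5] at hc
      by_cases h6 : c ∈ Sf ∧ c ∈ rdom ρ
      · exact Or.inr h6.2
      · rw [if_neg h6] at hc; exact absurd rfl hc
  set ξ : Ren := ⟨ξf, hξfin⟩ with hξ
  -- supports of the two function values
  have hK : suppY (f (ρ₁ • x)) ⊆ Sf ∪ ρ₁.1 '' suppX x := by
    intro k hk
    rcases supp_apply_subset suppX suppY hX hY f Sf hf (ρ₁ • x) hk with hk1 | hk1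
    · exact Or.inl hk1
    · exact Or.inr (supp_smul_subset suppX hX ρ₁ x hk1)
  have hK' : suppY (f (ρ₁' • x)) ⊆ Sf ∪ ρ₁'.1 '' suppX x := by
    intro k hk
    rcases supp_apply_subset suppX suppY hX hY f Sf hf (ρ₁' • x) hk with hk1 | hk1
    · exact Or.inl hk1
    · exact Or.inr (supp_smul_subset suppX hX ρ₁' x hk1)
  -- disjointness for hf
  have hθdisj : rdom θ ∩ Sf = ∅ := by
    apply Set.eq_empty_iff_forall_notMem.mpr
    rintro c ⟨hc1, hc2⟩
    apply hc1
    show θf c = c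
    rw [hθf]
    simp only
    rw [if_neg (fun h5 => (hB c h5).2.1 hc2), if_neg (fun h6 => h6.2.2 hc2)]
  have hχdisj : rdom χ ∩ Sf = ∅ := by
    apply Set.eq_empty_iff_forall_notMem.mpr
    rintro c ⟨hc1, hc2⟩
    apply hc1
    show χf c = c
    rw [hχf]
    simp only
    rw [if_neg (fun h5 => by
      obtain ⟨w, hw, hwc⟩ := h5
      exact (hB' c (hwc ▸ hmemB' w (hWA' hw))).2.1 hc2)]
  -- step 2 : θ • (ρ₁ • x) = χ • (ρ₁' • x)
  have e1 : θ • (ρ₁ • x) = χ • (ρ₁' • x) := by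
    rw [← mul_smul, ← mul_smul]
    apply (hX x).1
    intro a ha
    rw [ren_mul_apply, ren_mul_apply]
    show θf (ρ₁.1 a) = χf (ρ₁'.1 a)
    by_cases haA : a ∈ rnontriv ρ
    · -- a is freshened by ρ₁
      have hbB : ρ₁.1 a ∈ rimg ρ₁ := hmemB a haA
      rw [hθf, hχf]
      simp only
      rw [if_pos hbB, h3 a haA]
      by_cases haA' : a ∈ rnontriv ρ'
      · rw [if_neg (fun h5 => by
          obtain ⟨w, hw, hwc⟩ := h5
          exact (hinj' w (hWA' hw) a haA' hwc ▸ hw).2 haA)]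
      · rw [hρ1'_id a haA']
        rw [if_neg (fun h5 => by
          obtain ⟨w, hw, hwc⟩ := h5
          exact (hB' a (hwc ▸ hmemB' w (hWA' hw))).1 ha)]
    · rw [hρ1_id a haA, hθf, hχf]
      simp only
      rw [if_neg (fun h5 => (hB a h5).1 ha)]
      by_cases haA' : a ∈ rnontriv ρ'
      · by_cases haSf : a ∈ Sf
        · -- a ∈ W
          have haW : a ∈ W := ⟨⟨⟨ha, haSf⟩, haA'⟩, haA⟩
          rw [if_neg (fun h6 => h6.2.2 haSf), if_pos ⟨a, haW, rfl⟩, h3' a haA']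
        · rw [if_pos ⟨haA', haA, haSf⟩]
          rw [if_neg (fun h5 => by
            obtain ⟨w, hw, hwc⟩ := h5
            exact haSf ((hinj' w (hWA' hw) a haA' hwc) ▸ hw).1.1.2)]
      · rw [if_neg (fun h6 => haA' h6.1), hρ1'_id a haA']
        rw [if_neg (fun h5 => by
          obtain ⟨w, hw, hwc⟩ := h5
          exact (hB' a (hwc ▸ hmemB' w (hWA' hw))).1 ha)]
  -- hf transfers
  have e2 : θ • f (ρ₁ • x) = χ • f (ρ₁' • x) := by
    rw [hf θ _ hθdisj, hf χ _ hχdisj, e1]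
  -- agreement of ρ₂ρ and ξθ on suppY (f (ρ₁ • x))
  have hagK : ∀ k ∈ suppY (f (ρ₁ • x)), (ρ₂ * ρ).1 k = (ξ * θ).1 k := by
    intro k hk
    rw [ren_mul_apply, ren_mul_apply]
    show ρ₂.1 (ρ.1 k) = ξf (θf k)
    rcases hK hk with hkSf | ⟨a, hax, rfl⟩
    · -- k ∈ Sf
      have hkB : k ∉ rimg ρ₁ := fun h5 => (hB k h5).2.1 hkSf
      have hθk : θf k = k := by
        rw [hθf]; simp only
        rw [if_neg hkB, if_neg (fun h6 => h6.2.2 hkSf)]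
      rw [hθk, hξf]; simp only
      rw [if_neg (fun h5 => by
        obtain ⟨w, hw, hwc⟩ := h5
        exact (hB' k (hwc ▸ hmemB' w hw.1.2)).2.1 hkSf)]
      by_cases hkd : k ∈ rdom ρ
      · rw [if_pos ⟨hkSf, hkd⟩]
        exact hρ2_id _ (fun h5 => (hB _ h5).2.2 (hρA k hkd))
      · rw [if_neg (fun h6 => hkd h6.2), not_rdom ρ hkd]
        exact hρ2_id _ hkB
    · -- k = ρ₁ a, a ∈ suppX x
      by_cases haA : a ∈ rnontriv ρ
      · have hbB : ρ₁.1 a ∈ rimg ρ₁ := hmemB a haA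
        have hbnA : ρ₁.1 a ∉ rnontriv ρ := (hB _ hbB).2.2
        rw [hρ_id _ hbnA, h3 a haA]
        rw [hθf]; simp only
        rw [if_pos hbB, h3 a haA, hξf]; simp only
        by_cases haA' : a ∈ rnontriv ρ'
        · rw [if_pos ⟨a, ⟨⟨hax, haA'⟩, fun hw => hw.2 haA⟩, rfl⟩, h3' a haA']
        · rw [hρ1'_id a haA']
          rw [if_neg (fun h5 => by
            obtain ⟨w, hw, hwc⟩ := h5
            exact (hB' a (hwc ▸ hmemB' w hw.1.2)).1 hax)]
          rw [if_neg (fun h6 => haA' (Or.inl (hSfdom a h6.1 h6.2)))]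
      · rw [hρ1_id a haA, hρ_id a haA]
        have hanB : a ∉ rimg ρ₁ := fun h5 => (hB a h5).1 hax
        rw [hρ2_id a hanB, hθf]; simp only
        rw [if_neg hanB]
        by_cases haSf : a ∈ Sf
        · rw [if_neg (fun h6 => h6.2.2 haSf), hξf]; simp only
          rw [if_neg (fun h5 => by
            obtain ⟨w, hw, hwc⟩ := h5
            exact (hB' a (hwc ▸ hmemB' w hw.1.2)).2.1 haSf)]
          rw [if_neg (fun h6 => haA (Or.inl h6.2))]
        · by_cases haA' : a ∈ rnontriv ρ'
          · rw [if_pos ⟨haA', haA, haSf⟩, hξf]; simp only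
            rw [if_pos ⟨a, ⟨⟨hax, haA'⟩, fun hw => haSf hw.1.1.2⟩, rfl⟩, h3' a haA']
          · rw [if_neg (fun h6 => haA' h6.1), hξf]; simp only
            rw [if_neg (fun h5 => by
              obtain ⟨w, hw, hwc⟩ := h5
              exact (hB' a (hwc ▸ hmemB' w hw.1.2)).1 hax)]
            rw [if_neg (fun h6 => haSf h6.1)]
  -- agreement of ξχ and ρ₂'ρ' on suppY (f (ρ₁' • x))
  have hagK' : ∀ k ∈ suppY (f (ρ₁' • x)), (ξ * χ).1 k = (ρ₂' * ρ').1 k := by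
    intro k hk
    rw [ren_mul_apply, ren_mul_apply]
    show ξf (χf k) = ρ₂'.1 (ρ'.1 k)
    rcases hK' hk with hkSf | ⟨a, hax, rfl⟩
    · -- k ∈ Sf
      have hkB' : k ∉ rimg ρ₁' := fun h5 => (hB' k h5).2.1 hkSf
      have hχk : χf k = k := by
        rw [hχf]; simp only
        rw [if_neg (fun h5 => by
          obtain ⟨w, hw, hwc⟩ := h5
          exact hkB' (hwc ▸ hmemB' w (hWA' hw)))]
      rw [hχk, hξf]; simp only
      rw [if_neg (fun h5 => by
        obtain ⟨w, hw, hwc⟩ := h5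
        exact hkB' (hwc ▸ hmemB' w hw.1.2))]
      by_cases hkd : k ∈ rdom ρ
      · rw [if_pos ⟨hkSf, hkd⟩]
        have hkd' : k ∈ rdom ρ' := hSfdom k hkSf hkd
        have : ρ'.1 k ∈ rnontriv ρ' := hρ'A k hkd'
        rw [hagree k hkSf]
        exact (hρ2'_id _ (fun h5 => (hB' _ h5).2.2 this)).symm
      · rw [if_neg (fun h6 => hkd h6.2)]
        have hkd' : k ∉ rdom ρ' := fun h5 => hkd (hSfdom' k hkSf h5)
        rw [not_rdom ρ' hkd']
        exact (hρ2'_id k hkB').symm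
    · -- k = ρ₁' a, a ∈ suppX x
      by_cases haA' : a ∈ rnontriv ρ'
      · have hbB' : ρ₁'.1 a ∈ rimg ρ₁' := hmemB' a haA'
        have hbnA' : ρ₁'.1 a ∉ rnontriv ρ' := (hB' _ hbB').2.2
        rw [hρ'_id _ hbnA', h3' a haA']
        by_cases haW : a ∈ W
        · have hχk : χf (ρ₁'.1 a) = a := by
            rw [hχf]; simp only
            rw [if_pos ⟨a, haW, rfl⟩, h3' a haA']
          rw [hχk, hξf]; simp only
          rw [if_neg (fun h5 => by
            obtain ⟨w, hw, hwc⟩ := h5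
            exact (hB' a (hwc ▸ hmemB' w hw.1.2)).1 hax)]
          rw [if_neg (fun h6 => haW.2 (Or.inl h6.2))]
        · have hχk : χf (ρ₁'.1 a) = ρ₁'.1 a := by
            rw [hχf]; simp only
            rw [if_neg (fun h5 => by
              obtain ⟨w, hw, hwc⟩ := h5
              exact haW ((hinj' w (hWA' hw) a haA' hwc) ▸ hw))]
          rw [hχk, hξf]; simp only
          rw [if_pos ⟨a, ⟨⟨hax, haA'⟩, haW⟩, rfl⟩, h3' a haA']
      · rw [hρ1'_id a haA']
        have hanB' : a ∉ rimg ρ₁' := fun h5 => (hB' a h5).1 hax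
        have hand' : a ∉ rdom ρ' := fun h5 => haA' (Or.inl h5)
        rw [not_rdom ρ' hand', hρ2'_id a hanB']
        have hχk : χf a = a := by
          rw [hχf]; simp only
          rw [if_neg (fun h5 => by
            obtain ⟨w, hw, hwc⟩ := h5
            exact hanB' (hwc ▸ hmemB' w (hWA' hw)))]
        rw [hχk, hξf]; simp only
        rw [if_neg (fun h5 => by
          obtain ⟨w, hw, hwc⟩ := h5
          exact hanB' (hwc ▸ hmemB' w hw.1.2))]
        rw [if_neg (fun h6 => haA' (Or.inl (hSfdom a h6.1 h6.2)))]
  -- assemble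
  calc (ρ₂ * ρ) • f (ρ₁ • x)
      = (ξ * θ) • f (ρ₁ • x) := (hY _).1 _ _ hagK
    _ = ξ • (θ • f (ρ₁ • x)) := mul_smul _ _ _
    _ = ξ • (χ • f (ρ₁' • x)) := by rw [e2]
    _ = (ξ * χ) • f (ρ₁' • x) := (mul_smul _ _ _).symm
    _ = (ρ₂' * ρ') • f (ρ₁' • x) := (hY _).1 _ _ hagK'
end

section
/- For a supported renaming set X, x ∈ X, and atom a, the function λa.x mapping a to x and any other atom b to [a↦b]·x is a supported function from atoms to X, supported by supp(x). -/
def lamFun {X : Type*} [MulAction Ren X] (a : Atom) (x : X) : Atom → X :=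
  fun b => if b = a then x else atomRen a b • x

theorem stmt10 {X : Type*} [MulAction Ren X] (x : X) (S : Set Atom)
    (hS : RIsLeastSupport S x) (a : Atom) :
    ∀ (ρ : Ren), rdom ρ ∩ S = ∅ → ∀ z : Atom, ρ • lamFun a x z = lamFun a x (ρ.1 z) := by
  intro ρ hρ z
  have hfix : ∀ s ∈ S, ρ.1 s = s := by
    intro s hs
    by_contra h
    have hm : s ∈ rdom ρ ∩ S := ⟨h, hs⟩
    rw [hρ] at hm
    exact hm
  have haa : atomRen a a = 1 := by
    apply Subtype.ext
    funext c
    show (if c = a then a else c) = c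
    split <;> simp_all
  have key : ∀ b, lamFun a x b = atomRen a b • x := by
    intro b
    unfold lamFun
    split
    · subst ‹b = a›; rw [haa, one_smul]
    · rfl
  rw [key, key, ← mul_smul]
  apply hS.1
  intro s hs
  show ρ.1 ((atomRen a z).1 s) = (atomRen a (ρ.1 z)).1 s
  show ρ.1 (if s = a then z else s) = if s = a then ρ.1 z else s
  split
  · rfl
  · exact hfix s hs
end

section
/- For a supported renaming set X and distinct atoms a, a': [a]x = [a']x' iff a' ∉ supp(x) and [a↦a']·x = x', where [a]x = {(a,x)} ∪ {(b, [a↦b]·x) | b ∉ supp(x)}. -/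
/-- Atoms-abstraction in a renaming set: `[a]x`. -/
def rabs {X : Type*} [MulAction Ren X] (supp : X → Set Atom) (a : Atom) (x : X) :
    Set (Atom × X) :=
  {p | p = (a, x)} ∪ {p | ∃ b, b ∉ supp x ∧ p = (b, atomRen a b • x)}

theorem stmt13 {X : Type*} [MulAction Ren X] (supp : X → Set Atom)
    (hsupp : ∀ x, RIsLeastSupport (supp x) x) (a a' : Atom) (hne : a ≠ a') (x x' : X) :
    rabs supp a x = rabs supp a' x' ↔ a' ∉ supp x ∧ atomRen a a' • x = x' := by
  have hval : ∀ (c b d : Atom), (atomRen c b).1 d = if d = c then b else d := fun _ _ _ => rfl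
  have heqx : ∀ (y : X) (ρ ρ' : Ren), (∀ d ∈ supp y, ρ.1 d = ρ'.1 d) → ρ • y = ρ' • y :=
    fun y => (hsupp y).1
  have hsub : ∀ (y : X) (c b : Atom), supp (atomRen c b • y) ⊆ (supp y \ {c}) ∪ {b} := by
    intro y c b
    apply (hsupp _).2
    intro ρ ρ' hagree
    rw [smul_smul, smul_smul]
    apply heqx
    intro d hd
    show ρ.1 ((atomRen c b).1 d) = ρ'.1 ((atomRen c b).1 d)
    apply hagree
    rw [hval]
    by_cases hdc : d = c
    · simp [hdc]
    · simp only [if_neg hdc, Set.mem_union, Set.mem_diff, Set.mem_singleton_iff]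
      exact Or.inl ⟨hd, hdc⟩
  constructor
  · intro h
    have h1 : ((a', x') : Atom × X) ∈ rabs supp a' x' := Or.inl rfl
    rw [← h] at h1
    rcases h1 with h1 | ⟨b, hb, h1⟩
    · exact absurd (congrArg Prod.fst h1) (Ne.symm hne)
    · have hb' : a' = b := congrArg Prod.fst h1
      subst hb'
      exact ⟨hb, (congrArg Prod.snd h1).symm⟩
  · rintro ⟨ha', rfl⟩
    set x' := atomRen a a' • x with hx'
    -- key renaming equalities
    have F3 : atomRen a' a • x' = x := by
      rw [hx', smul_smul]
      nth_rewrite 2 [← one_smul Ren x]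
      apply heqx
      intro d hd
      show (atomRen a' a).1 ((atomRen a a').1 d) = d
      rw [hval, hval]
      by_cases hda : d = a
      · simp [hda]
      · have hda' : d ≠ a' := fun hh => ha' (hh ▸ hd)
        simp [hda, hda']
    have F4 : ∀ b : Atom, atomRen a' b • x' = atomRen a b • x := by
      intro b
      rw [hx', smul_smul]
      apply heqx
      intro d hd
      show (atomRen a' b).1 ((atomRen a a').1 d) = (atomRen a b).1 d
      rw [hval, hval, hval]
      by_cases hda : d = a
      · simp [hda]
      · have hda' : d ≠ a' := fun hh => ha' (hh ▸ hd)
        simp [hda, hda']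
    have F1 : a ∉ supp x' := by
      intro hmem
      rcases hsub x a a' hmem with ⟨_, hh⟩ | hh
      · exact hh rfl
      · exact hne hh
    have F2 : ∀ b : Atom, b ∉ supp x' → b ≠ a → b ∉ supp x := by
      intro b hb hba hmem
      have : b ∈ supp (atomRen a' a • x') := F3 ▸ hmem
      rcases hsub x' a' a this with ⟨hh, _⟩ | hh
      · exact hb hh
      · exact hba hh
    have F5 : ∀ b : Atom, b ∉ supp x → b ≠ a' → b ∉ supp x' := by
      intro b hb hba' hmem
      rcases hsub x a a' hmem with ⟨hh, _⟩ | hh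
      · exact hb hh
      · exact hba' hh
    ext p
    constructor
    · rintro (hp | ⟨b, hb, hp⟩)
      · subst hp
        exact Or.inr ⟨a, F1, by rw [F3]⟩
      · subst hp
        by_cases hba' : b = a'
        · subst hba'
          exact Or.inl rfl
        · exact Or.inr ⟨b, F5 b hb hba', by rw [F4]⟩
    · rintro (hp | ⟨b, hb, hp⟩)
      · subst hp
        exact Or.inr ⟨a', ha', rfl⟩
      · subst hp
        by_cases hba : b = a
        · subst hba
          refine Or.inl ?_
          show (b, atomRen a' b • x') = (b, x)
          rw [F3]
        · exact Or.inr ⟨b, F2 b hb hba, by rw [F4]⟩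
end
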